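/- arXiv:2308.15347 — 5 statements merged into one kernel-verified Lean document; each statement's English description precedes it below -/
import Mathlib

section
/- Let y, η > 0, σ > 0, τ ≥ 0, f ≥ 0 with f(1+σ) < 1, and let W_a0 > 0, W_u0 > τ/(1−σf). Set q1 = 1 + fη/y and q2 = 1 + η/y − σfη/y. Suppose a, u : ℕ → ℝ are sequences (the adversary and user total wealths at the end of each epoch) satisfying, for every e: 0 ≤ a(e) ≤ W_a0·q1^e and u(e) ≥ W_u0·q2^e − (τη/y)·(q2^e − 1)/(q2 − 1). Then the fraction of user transactions front run in epoch e, namely ⌊a(e)/y⌋ / ⌈(u(e) − τ)/y⌉ (floors and ceilings taken as integers, coerced to ℝ), tends to 0 as e → ∞. -/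
open Filter

theorem stmt0
    (y η σ τ f W_a0 W_u0 : ℝ)
    (hy : 0 < y) (hη : 0 < η) (hσ : 0 < σ) (hτ : 0 ≤ τ) (hf : 0 ≤ f)
    (hfσ : f * (1 + σ) < 1)
    (hWa : 0 < W_a0) (hWu : W_u0 > τ / (1 - σ * f))
    (q1 q2 : ℝ) (hq1 : q1 = 1 + f * η / y) (hq2 : q2 = 1 + η / y - σ * f * η / y)
    (a u : ℕ → ℝ)
    (ha : ∀ e, 0 ≤ a e ∧ a e ≤ W_a0 * q1 ^ e)
    (hu : ∀ e, u e ≥ W_u0 * q2 ^ e - (τ * η / y) * (q2 ^ e - 1) / (q2 - 1)) :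
    Tendsto (fun e : ℕ => ((⌊a e / y⌋ : ℤ) : ℝ) / ((⌈(u e - τ) / y⌉ : ℤ) : ℝ))
      atTop (nhds 0) := by
  have hσf : σ * f < 1 := by nlinarith
  have h1σf : 0 < 1 - σ * f := by linarith
  have hq1ge : (1:ℝ) ≤ q1 := by
    rw [hq1]
    have : 0 ≤ f * η / y := by positivity
    linarith
  have hq1pos : 0 < q1 := by linarith
  have hq12 : q1 < q2 := by
    have hpos : 0 < 1 - f * (1 + σ) := by linarith
    have h1 : 0 < (η / y) * (1 - f * (1 + σ)) := by positivity
    have h2 : q2 - q1 = (η / y) * (1 - f * (1 + σ)) := by rw [hq1, hq2]; field_simp; ring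
    linarith
  have hq2gt1 : 1 < q2 := lt_of_le_of_lt hq1ge hq12
  have hq2pos : (0:ℝ) < q2 := by linarith
  have hq2sub : q2 - 1 = (η / y) * (1 - σ * f) := by rw [hq2]; ring
  set c : ℝ := W_u0 - τ / (1 - σ * f) with hc
  have hcpos : 0 < c := by simp only [hc]; linarith
  clear_value c
  -- key lower bound for u e - τ
  have hlow : ∀ e : ℕ, c * q2 ^ e ≤ u e - τ := by
    intro e
    have hu' := hu e
    have hkey : (τ * η / y) * (q2 ^ e - 1) / (q2 - 1) = (τ / (1 - σ * f)) * (q2 ^ e - 1) := by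
      rw [hq2sub]
      field_simp
    have hτle : τ ≤ τ / (1 - σ * f) := by
      rw [le_div_iff₀ h1σf]
      nlinarith [mul_nonneg (mul_nonneg hτ hσ.le) hf]
    have hpow1 : (1:ℝ) ≤ q2 ^ e := one_le_pow₀ (le_of_lt hq2gt1)
    have : u e ≥ W_u0 * q2 ^ e - (τ / (1 - σ * f)) * (q2 ^ e - 1) := by
      rw [← hkey]; exact hu'
    have hineq : c * q2 ^ e + τ ≤ W_u0 * q2 ^ e - (τ / (1 - σ * f)) * (q2 ^ e - 1) := by
      have : c * q2 ^ e + τ = W_u0 * q2 ^ e - (τ / (1 - σ * f)) * (q2 ^ e - 1)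
          - (τ / (1 - σ * f) - τ) := by simp only [hc]; ring
      rw [this]
      linarith
    linarith
  -- squeeze
  have htop : Tendsto (fun e : ℕ => (W_a0 / c) * (q1 / q2) ^ e) atTop (nhds 0) := by
    have h0 : (0:ℝ) ≤ q1 / q2 := by positivity
    have h1 : q1 / q2 < 1 := (div_lt_one hq2pos).mpr hq12
    have := tendsto_pow_atTop_nhds_zero_of_lt_one h0 h1
    simpa using this.const_mul (W_a0 / c)
  refine tendsto_of_tendsto_of_tendsto_of_le_of_le tendsto_const_nhds htop ?_ ?_
  · intro e
    have ha0 := (ha e).1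
    have hD : (0:ℝ) < ((⌈(u e - τ) / y⌉ : ℤ) : ℝ) := by
      have h1 : 0 < c * q2 ^ e / y := by positivity
      have h2 : c * q2 ^ e / y ≤ (u e - τ) / y := by
        exact div_le_div_of_nonneg_right (hlow e) hy.le
      have := Int.le_ceil ((u e - τ) / y)
      linarith
    have hN : (0:ℝ) ≤ ((⌊a e / y⌋ : ℤ) : ℝ) := by
      have : (0:ℤ) ≤ ⌊a e / y⌋ := Int.floor_nonneg.mpr (by positivity)
      exact_mod_cast this
    positivity
  · intro e
    obtain ⟨ha0, haup⟩ := ha e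
    have hDlb : c * q2 ^ e / y ≤ ((⌈(u e - τ) / y⌉ : ℤ) : ℝ) := by
      have h2 : c * q2 ^ e / y ≤ (u e - τ) / y :=
        div_le_div_of_nonneg_right (hlow e) hy.le
      have := Int.le_ceil ((u e - τ) / y)
      linarith
    have hDpos : (0:ℝ) < c * q2 ^ e / y := by positivity
    have hNub : ((⌊a e / y⌋ : ℤ) : ℝ) ≤ W_a0 * q1 ^ e / y := by
      have h1 := Int.floor_le (a e / y)
      have h2 : a e / y ≤ W_a0 * q1 ^ e / y := div_le_div_of_nonneg_right haup hy.le
      linarith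
    have hNnn : (0:ℝ) ≤ ((⌊a e / y⌋ : ℤ) : ℝ) := by
      have : (0:ℤ) ≤ ⌊a e / y⌋ := Int.floor_nonneg.mpr (by positivity)
      exact_mod_cast this
    have hstep : ((⌊a e / y⌋ : ℤ) : ℝ) / ((⌈(u e - τ) / y⌉ : ℤ) : ℝ)
        ≤ (W_a0 * q1 ^ e / y) / (c * q2 ^ e / y) :=
      div_le_div₀ (by positivity) hNub hDpos hDlb
    have heq : (W_a0 * q1 ^ e / y) / (c * q2 ^ e / y) = (W_a0 / c) * (q1 / q2) ^ e := by
      rw [div_pow]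
      field_simp
    rw [heq] at hstep
    exact hstep
end

section
/- Let y, η > 0, σ > 0, τ ≥ 0, f ≥ 0 with f(1+σ) < 1, W_a0 > 0 and W_u0 > τ/(1−σf). Set q1 = 1 + fη/y and q2 = 1 + η/y − σfη/y. Then the sequence e ↦ (W_a0·q1^e) / (W_u0·q2^e − (τη/y)·(q2^e − 1)/(q2 − 1) − τ) tends to 0 as e → ∞. -/
open Filter

theorem stmt1
    (y η σ τ f W_a0 W_u0 : ℝ)
    (hy : 0 < y) (hη : 0 < η) (hσ : 0 < σ) (hτ : 0 ≤ τ) (hf : 0 ≤ f)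
    (hfσ : f * (1 + σ) < 1)
    (hWa : 0 < W_a0) (hWu : W_u0 > τ / (1 - σ * f))
    (q1 q2 : ℝ) (hq1 : q1 = 1 + f * η / y) (hq2 : q2 = 1 + η / y - σ * f * η / y) :
    Tendsto
      (fun e : ℕ =>
        (W_a0 * q1 ^ e) /
          (W_u0 * q2 ^ e - (τ * η / y) * (q2 ^ e - 1) / (q2 - 1) - τ))
      atTop (nhds 0) := by
  have hy' : y ≠ 0 := ne_of_gt hy
  have hσf : 0 < 1 - σ * f := by
    rcases eq_or_lt_of_le hf with h | h
    · simp [← h]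
    · nlinarith
  have hq2m1 : q2 - 1 = η / y * (1 - σ * f) := by rw [hq2]; ring
  have hq2gt : 1 < q2 := by
    have : 0 < η / y * (1 - σ * f) := mul_pos (div_pos hη hy) hσf
    linarith
  have hq2pos : 0 < q2 := by linarith
  have hq21 : q2 - 1 ≠ 0 := by linarith
  have hq1pos : 0 < q1 := by
    rw [hq1]; positivity
  have hq1lt : q1 < q2 := by
    have h0 : 0 < η / y * (1 - f * (1 + σ)) := mul_pos (div_pos hη hy) (by linarith)
    have : q2 - q1 = η / y * (1 - f * (1 + σ)) := by rw [hq1, hq2]; ring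
    linarith
  set A : ℝ := W_u0 - τ / (1 - σ * f) with hA
  set C : ℝ := τ / (1 - σ * f) - τ with hC
  have hApos : 0 < A := by
    rw [hA]; linarith
  have key : ∀ e : ℕ,
      (W_a0 * q1 ^ e) /
          (W_u0 * q2 ^ e - (τ * η / y) * (q2 ^ e - 1) / (q2 - 1) - τ)
        = (W_a0 * (q1 / q2) ^ e) / (A + C * (1 / q2) ^ e) := by
    intro e
    have hq2e : (q2 : ℝ) ^ e ≠ 0 := pow_ne_zero _ (ne_of_gt hq2pos)
    have hσf' : (1 : ℝ) - σ * f ≠ 0 := ne_of_gt hσf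
    have hden : W_u0 * q2 ^ e - (τ * η / y) * (q2 ^ e - 1) / (q2 - 1) - τ
        = A * q2 ^ e + C := by
      rw [hA, hC, hq2m1]
      field_simp
      ring
    have h3 : A + C * (1 / q2) ^ e = (A * q2 ^ e + C) / q2 ^ e := by
      field_simp
      rw [add_mul, mul_assoc, ← mul_pow, one_div_mul_cancel (ne_of_gt hq2pos), one_pow, mul_one]
    rw [hden, h3, div_div_eq_mul_div, div_pow, mul_assoc, div_mul_cancel₀ _ hq2e]
  simp_rw [key]
  have h1 : Tendsto (fun e : ℕ => W_a0 * (q1 / q2) ^ e) atTop (nhds (W_a0 * 0)) := by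
    apply Tendsto.const_mul
    apply tendsto_pow_atTop_nhds_zero_of_lt_one
    · positivity
    · rw [div_lt_one hq2pos]; exact hq1lt
  have h2 : Tendsto (fun e : ℕ => A + C * (1 / q2) ^ e) atTop (nhds (A + C * 0)) := by
    apply Tendsto.const_add
    apply Tendsto.const_mul
    apply tendsto_pow_atTop_nhds_zero_of_lt_one
    · positivity
    · rw [div_lt_one hq2pos]; linarith
  have := h1.div h2 (by simp [ne_of_gt hApos])
  simpa [Pi.div_def] using this
end

section
/- Let y, η > 0, σ > 0, ε > 0 with σ + ε < 1, let 0 ≤ f < (1−σ−ε)/(1+σ), let 0 ≤ τ ≤ ε·W_u, and let W_a, W_u be reals with y < W_a and W_a < σ·W_u. Then (W_a + ⌊W_a/y⌋·f·η) / (W_u + ⌊W_a/y⌋·(1−f)·η + (⌈(W_u−τ)/y⌉ − ⌊W_a/y⌋)·η) < σ, where ⌊·⌋ and ⌈·⌉ denote the floor and ceiling of a real number (as integers, coerced back to ℝ). In particular the denominator is positive. -/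
theorem stmt3
    (y η σ ε f τ W_a W_u : ℝ)
    (hy : 0 < y) (hη : 0 < η) (hσ : 0 < σ) (hε : 0 < ε) (hσε : σ + ε < 1)
    (hf0 : 0 ≤ f) (hf : f < (1 - σ - ε) / (1 + σ))
    (hτ0 : 0 ≤ τ) (hτ : τ ≤ ε * W_u)
    (hWa : y < W_a) (hWaWu : W_a < σ * W_u) :
    0 < W_u + ((⌊W_a / y⌋ : ℤ) : ℝ) * (1 - f) * η +
        (((⌈(W_u - τ) / y⌉ : ℤ) : ℝ) - ((⌊W_a / y⌋ : ℤ) : ℝ)) * η ∧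
    (W_a + ((⌊W_a / y⌋ : ℤ) : ℝ) * f * η) /
        (W_u + ((⌊W_a / y⌋ : ℤ) : ℝ) * (1 - f) * η +
          (((⌈(W_u - τ) / y⌉ : ℤ) : ℝ) - ((⌊W_a / y⌋ : ℤ) : ℝ)) * η) < σ := by
  set a : ℝ := ((⌊W_a / y⌋ : ℤ) : ℝ) with ha
  set b : ℝ := ((⌈(W_u - τ) / y⌉ : ℤ) : ℝ) with hb
  have hWu : 0 < W_u := by nlinarith
  have ha1 : (1 : ℝ) ≤ a := by
    rw [ha]
    exact_mod_cast Int.le_floor.mpr (by rw [le_div_iff₀ hy]; push_cast; linarith)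
  have hay : a * y ≤ W_a := by
    have := Int.floor_le (W_a / y)
    rw [← ha] at this
    calc a * y ≤ (W_a / y) * y := by nlinarith
    _ = W_a := by field_simp
  have hby : (1 - ε) * W_u ≤ b * y := by
    have h1 : (W_u - τ) / y ≤ b := Int.le_ceil _
    have : W_u - τ ≤ b * y := by
      calc W_u - τ = ((W_u - τ) / y) * y := by field_simp
      _ ≤ b * y := by nlinarith
    nlinarith
  have hfσ : f * (1 + σ) < 1 - σ - ε :=
    (lt_div_iff₀ (by linarith : (0:ℝ) < 1 + σ)).mp hf
  have hfσ0 : 0 ≤ f * (1 + σ) := mul_nonneg hf0 (by linarith)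
  have key : a * f * (1 + σ) ≤ σ * b := by
    have h1 : a * f * (1 + σ) * y ≤ W_a * (f * (1 + σ)) := by
      nlinarith [mul_le_mul_of_nonneg_right hay hfσ0]
    have h2 : W_a * (f * (1 + σ)) ≤ σ * W_u * (f * (1 + σ)) :=
      mul_le_mul_of_nonneg_right (le_of_lt hWaWu) hfσ0
    have h3 : σ * W_u * (f * (1 + σ)) ≤ σ * W_u * (1 - σ - ε) := by nlinarith
    have h4 : σ * W_u * (1 - σ - ε) ≤ σ * ((1 - ε) * W_u) := by nlinarith
    have h5 : σ * ((1 - ε) * W_u) ≤ σ * (b * y) := by nlinarith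
    nlinarith
  have hab : a * f ≤ b := by nlinarith
  have hD : 0 < W_u + a * (1 - f) * η + (b - a) * η := by nlinarith
  refine ⟨hD, ?_⟩
  rw [div_lt_iff₀ hD]
  nlinarith
end

section
/- Let y > 0, W > 0, f ≥ 0, η ≥ 0 and c ≥ 0 be real numbers satisfying y² + W·f·η < c·W·(y+η). Then ⌊⌊W/y⌋·f·η/y⌋ < ⌊c·⌈W/y⌉·(y+η)/y⌋ as integers, where ⌊·⌋ and ⌈·⌉ denote the floor and ceiling of a real number. -/
theorem stmt4
    (y W f η c : ℝ)
    (hy : 0 < y) (hW : 0 < W) (hf : 0 ≤ f) (hη : 0 ≤ η) (hc : 0 ≤ c)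
    (h : y ^ 2 + W * f * η < c * W * (y + η)) :
    ⌊((⌊W / y⌋ : ℤ) : ℝ) * f * η / y⌋ < ⌊c * ((⌈W / y⌉ : ℤ) : ℝ) * (y + η) / y⌋ := by
  set a : ℝ := ((⌊W / y⌋ : ℤ) : ℝ)
  set b : ℝ := ((⌈W / y⌉ : ℤ) : ℝ)
  have h1 : a ≤ W / y := Int.floor_le _
  have h2 : W / y ≤ b := Int.le_ceil _
  rw [Int.lt_iff_add_one_le, Int.le_floor]
  push_cast
  have h3 : ((⌊a * f * η / y⌋ : ℤ) : ℝ) ≤ a * f * η / y := Int.floor_le _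
  have key : a * f * η / y + 1 ≤ c * b * (y + η) / y := by
    rw [div_add' _ _ _ hy.ne', div_le_div_iff_of_pos_right hy]
    have hfη : 0 ≤ f * η := mul_nonneg hf hη
    have hA : a * f * η ≤ (W / y) * f * η := by nlinarith
    have hB : c * (W / y) * (y + η) ≤ c * b * (y + η) := by
      have := mul_nonneg hc (add_nonneg hy.le hη)
      nlinarith
    have hmid : (W / y) * f * η + y < c * (W / y) * (y + η) := by
      have hWy : W / y * y = W := div_mul_cancel₀ _ hy.ne'
      refine (mul_lt_mul_iff_of_pos_right hy).mp ?_
      calc (W / y * f * η + y) * y = (W / y * y) * f * η + y ^ 2 := by ring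
        _ = W * f * η + y ^ 2 := by rw [hWy]
        _ < c * W * (y + η) := by linarith
        _ = c * (W / y * y) * (y + η) := by rw [hWy]
        _ = c * (W / y) * (y + η) * y := by ring
    linarith
  linarith
end

section
/- Let W, y, η > 0, f ≥ 0, c ≥ 0 satisfy f·η + y²/W < c·η·(1−f) − c·y²/W, and let W' be a real number with W' ≤ W·(1 + f·η/y). Then c·⌈W'/y⌉ < ⌊c·⌈W/y⌉·(y+η)/y⌋ − ⌊⌊W/y⌋·f·η/y⌋, where ⌊·⌋ and ⌈·⌉ denote the floor and ceiling of a real number (as integers, coerced back to ℝ). -/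
theorem stmt8
    (W y η f c W' : ℝ)
    (hW : 0 < W) (hy : 0 < y) (hη : 0 < η) (hf : 0 ≤ f) (hc : 0 ≤ c)
    (h : f * η + y ^ 2 / W < c * η * (1 - f) - c * y ^ 2 / W)
    (hW' : W' ≤ W * (1 + f * η / y)) :
    c * ((⌈W' / y⌉ : ℤ) : ℝ) <
      ((⌊c * ((⌈W / y⌉ : ℤ) : ℝ) * (y + η) / y⌋ : ℤ) : ℝ) -
        ((⌊((⌊W / y⌋ : ℤ) : ℝ) * f * η / y⌋ : ℤ) : ℝ) := by
  have h1 : ((⌈W' / y⌉ : ℤ) : ℝ) < W' / y + 1 := Int.ceil_lt_add_one _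
  have h2 : W' / y ≤ W * (1 + f * η / y) / y := by gcongr
  have h3 : c * ((⌈W / y⌉ : ℤ) : ℝ) * (y + η) / y - 1 <
      ((⌊c * ((⌈W / y⌉ : ℤ) : ℝ) * (y + η) / y⌋ : ℤ) : ℝ) := Int.sub_one_lt_floor _
  have h4 : W / y ≤ ((⌈W / y⌉ : ℤ) : ℝ) := Int.le_ceil _
  have h5 : ((⌊((⌊W / y⌋ : ℤ) : ℝ) * f * η / y⌋ : ℤ) : ℝ) ≤
      ((⌊W / y⌋ : ℤ) : ℝ) * f * η / y := Int.floor_le _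
  have h6 : ((⌊W / y⌋ : ℤ) : ℝ) ≤ W / y := Int.floor_le _
  have h7 : (0:ℝ) ≤ ((⌊W / y⌋ : ℤ) : ℝ) := by
    have : (0:ℤ) ≤ ⌊W / y⌋ := Int.floor_nonneg.mpr (le_of_lt (div_pos hW hy))
    exact_mod_cast this
  -- key inequality: hypothesis multiplied by W / y^2
  have hy2 : (0:ℝ) < y ^ 2 := by positivity
  have hA : f * η * W + y ^ 2 < c * η * (1 - f) * W - c * y ^ 2 := by
    have := mul_lt_mul_of_pos_right h hW
    have hWne : W ≠ 0 := ne_of_gt hW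
    field_simp at this
    nlinarith [this]
  have hkey : W * f * η / y ^ 2 + 1 + c * W * f * η / y ^ 2 + c < c * W * η / y ^ 2 := by
    rw [show W * f * η / y ^ 2 + 1 + c * W * f * η / y ^ 2 + c
        = (W * f * η + y ^ 2 + c * W * f * η + c * y ^ 2) / y ^ 2 by field_simp,
      div_lt_div_iff₀ hy2 hy2]
    nlinarith [mul_lt_mul_of_pos_right hA hy2]
  -- bound LHS
  have hL : c * ((⌈W' / y⌉ : ℤ) : ℝ) ≤ c * (W * (1 + f * η / y) / y + 1) := by
    apply mul_le_mul_of_nonneg_left _ hc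
    linarith
  -- bound ceiling term for RHS
  have hR1 : c * (W / y) * (y + η) / y ≤ c * ((⌈W / y⌉ : ℤ) : ℝ) * (y + η) / y := by
    have h' : c * (W / y) ≤ c * ((⌈W / y⌉ : ℤ) : ℝ) := mul_le_mul_of_nonneg_left h4 hc
    have h'' : c * (W / y) * (y + η) ≤ c * ((⌈W / y⌉ : ℤ) : ℝ) * (y + η) :=
      mul_le_mul_of_nonneg_right h' (by positivity)
    exact div_le_div_of_nonneg_right h'' hy.le
  -- bound floor product term
  have hR2 : ((⌊W / y⌋ : ℤ) : ℝ) * f * η / y ≤ (W / y) * f * η / y := by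
    gcongr
  have hyne : y ≠ 0 := ne_of_gt hy
  have hfin : c * (W * (1 + f * η / y) / y + 1) <
      c * (W / y) * (y + η) / y - 1 - (W / y) * f * η / y := by
    have e1 : c * (W * (1 + f * η / y) / y + 1) = c * W / y + c * W * f * η / y ^ 2 + c := by
      field_simp
    have e2 : c * (W / y) * (y + η) / y = c * W / y + c * W * η / y ^ 2 := by
      field_simp
      try ring
    have e3 : (W / y) * f * η / y = W * f * η / y ^ 2 := by
      rw [div_mul_eq_mul_div, div_mul_eq_mul_div, div_div]
      ring_nf
    rw [e1, e2, e3]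
    linarith
  linarith
end
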